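/- Let t ∈ ω^{<ω} and let (s_ℓ)_{ℓ∈ω} be a sequence in ω^{<ω} such that t⌢ℓ ⊆ s_ℓ for every ℓ ∈ ω. Then the sequence (s_ℓ) converges to t in the topology τ₀. -/

import Mathlib

def cone (t : List ℕ) : Set (List ℕ) := {s | t <+: s}

def subbasis0 : Set (Set (List ℕ)) :=
  {C | ∃ t, C = cone t} ∪ {C | ∃ t, C = (cone t)ᶜ}

def tau0 : TopologicalSpace (List ℕ) := TopologicalSpace.generateFrom subbasis0

theorem stmt7 (t : List ℕ) (s : ℕ → List ℕ) (hs : ∀ ℓ : ℕ, t ++ [ℓ] <+: s ℓ) :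
    Filter.Tendsto s Filter.atTop (@nhds _ tau0 t) := by
  rw [tau0, TopologicalSpace.tendsto_nhds_generateFrom_iff]
  rintro S (⟨u, rfl⟩ | ⟨u, rfl⟩) ht
  · filter_upwards with ℓ
    exact ht.trans ((List.prefix_append t [ℓ]).trans (hs ℓ))
  · refine Filter.mem_of_superset (Filter.Ici_mem_atTop (u.getD t.length 0 + 1)) (fun ℓ hℓ h => ht ?_)
    simp only [Set.mem_Ici] at hℓ
    rcases List.prefix_or_prefix_of_prefix h (hs ℓ) with h1 | h1
    · rcases List.prefix_concat_iff.mp h1 with h2 | h2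
      · subst h2
        simp [List.getD, List.getElem?_append_right] at hℓ
      · exact h2
    · exfalso
      have h3 : ℓ = u[t.length]'(by
          have := h1.length_le; simpa using this) := by
        have := h1.getElem (i := t.length) (by simp)
        simpa using this
      have : u.getD t.length 0 = ℓ := by
        rw [List.getD_eq_getElem?_getD, List.getElem?_eq_getElem, h3]
        rfl
      omega
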